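/- Let G be a finite simple graph without isolated vertices. For a vertex 𝔸 = (A′₀ ⊎ A″₀ ⊂ ⋯ ⊂ A′_k ⊎ A″_k) of sd sd B(G) (a chain of nonempty simplices of B(G)), let μ′(𝔸) be the smallest nonempty set in the chain A′₀ ⊆ ⋯ ⊆ A′_k ⊆ CN(A″_k) ⊆ ⋯ ⊆ CN(A″₀), and let μ″(𝔸) be the smallest nonempty set in the chain A″₀ ⊆ ⋯ ⊆ A″_k ⊆ CN(A′_k) ⊆ ⋯ ⊆ CN(A′₀). Then μ′(𝔸) and μ″(𝔸) are well defined, μ′(𝔸) ⊎ μ″(𝔸) is a vertex of B₁(G), and the map 𝔸 ↦ μ′(𝔸) ⊎ μ″(𝔸) is a simplicial ℤ₂-map sd sd B(G) → B₁(G). -/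

import Mathlib

open Finset

attribute [local instance] Classical.propDecidable

noncomputable section

variable {V : Type*}

/-- The set `CN(A)` of common neighbors of `A` in `G` (so `CN(∅) = V`). -/
def CN [Fintype V] (G : SimpleGraph V) (A : Finset V) : Finset V :=
  Finset.univ.filter fun v => ∀ a ∈ A, G.Adj a v

/-- The shore of `S ⊆ V × {1,2}` lying over `b` (with `false` for the first copy of `V`
and `true` for the second). -/
def shore (S : Finset (V × Bool)) (b : Bool) : Finset V :=
  (S.filter fun p => p.2 = b).image Prod.fst

/-- `A' ⊎ A'' := (A' × {1}) ∪ (A'' × {2})`, with `false` for `1` and `true` for `2`. -/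
def joinPair (A' A'' : Finset V) : Finset (V × Bool) :=
  A'.image (fun v => (v, false)) ∪ A''.image (fun v => (v, true))

/-- The ℤ₂-action on subsets of `V × {1,2}`: interchange the two copies of `V`,
i.e. `A' ⊎ A'' ↦ A'' ⊎ A'`. -/
def swapFinset (S : Finset (V × Bool)) : Finset (V × Bool) :=
  S.image fun p => (p.1, !p.2)

/-- `G[A', A'']` is complete: every vertex of `A'` is adjacent to every vertex of `A''`. -/
def IsCompleteBip (G : SimpleGraph V) (A' A'' : Finset V) : Prop :=
  ∀ a ∈ A', ∀ b ∈ A'', G.Adj a b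

/-- Simplices of the box complex `B(G)`: sets `A' ⊎ A''` with `A'`, `A''` disjoint,
`G[A', A'']` complete and `CN(A') ≠ ∅ ≠ CN(A'')`. -/
def BoxSimplex [Fintype V] (G : SimpleGraph V) (S : Finset (V × Bool)) : Prop :=
  Disjoint (shore S false) (shore S true) ∧
  IsCompleteBip G (shore S false) (shore S true) ∧
  (CN G (shore S false)).Nonempty ∧ (CN G (shore S true)).Nonempty

/-- Simplices of the box complex `B₀(G)`: sets `A' ⊎ A''` with `A'`, `A''` disjoint and
`G[A', A'']` complete. -/
def Box0Simplex (G : SimpleGraph V) (S : Finset (V × Bool)) : Prop :=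
  Disjoint (shore S false) (shore S true) ∧
  IsCompleteBip G (shore S false) (shore S true)

/-- Vertices of `B₁(G)`: sets `A' ⊎ A''` with `A'`, `A''` nonempty, disjoint and
`G[A', A'']` complete. -/
def B1Vertex (G : SimpleGraph V) (S : Finset (V × Bool)) : Prop :=
  (shore S false).Nonempty ∧ (shore S true).Nonempty ∧
  Disjoint (shore S false) (shore S true) ∧
  IsCompleteBip G (shore S false) (shore S true)

/-- Simplices of the order complex `B₁(G)`: chains of vertices of `B₁(G)` under inclusion. -/
def B1Simplex (G : SimpleGraph V) (C : Finset (Finset (V × Bool))) : Prop :=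
  (∀ T ∈ C, B1Vertex G T) ∧ IsChain (· ⊆ ·) (C : Set (Finset (V × Bool)))

/-- Simplices of the barycentric subdivision `sd K` of the complex `K` whose simplices are
given by the predicate `P`: chains of nonempty simplices of `K` under inclusion. -/
def sdSimplex {γ : Type*} (P : Finset γ → Prop) (C : Finset (Finset γ)) : Prop :=
  (∀ S ∈ C, P S ∧ S.Nonempty) ∧ IsChain (· ⊆ ·) (C : Set (Finset γ))

/-- Vertices of `sd sd B(G)`: nonempty chains `𝔸` of nonempty simplices of `B(G)`. -/
def SdSdBVertex [Fintype V] (G : SimpleGraph V) (𝔸 : Finset (Finset (V × Bool))) : Prop :=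
  𝔸.Nonempty ∧ sdSimplex (BoxSimplex G) 𝔸

/-- For a vertex `𝔸 = (A'₀ ⊎ A''₀ ⊂ ⋯ ⊂ A'_k ⊎ A''_k)` of `sd sd B(G)`, the chain of sets
`A'₀ ⊆ ⋯ ⊆ A'_k ⊆ CN(A''_k) ⊆ ⋯ ⊆ CN(A''₀)` (as a set of sets). -/
def fam1 [Fintype V] (G : SimpleGraph V) (𝔸 : Finset (Finset (V × Bool))) :
    Finset (Finset V) :=
  𝔸.image (fun S => shore S false) ∪ 𝔸.image (fun S => CN G (shore S true))

/-- For a vertex `𝔸 = (A'₀ ⊎ A''₀ ⊂ ⋯ ⊂ A'_k ⊎ A''_k)` of `sd sd B(G)`, the chain of sets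
`A''₀ ⊆ ⋯ ⊆ A''_k ⊆ CN(A'_k) ⊆ ⋯ ⊆ CN(A'₀)` (as a set of sets). -/
def fam2 [Fintype V] (G : SimpleGraph V) (𝔸 : Finset (Finset (V × Bool))) :
    Finset (Finset V) :=
  𝔸.image (fun S => shore S true) ∪ 𝔸.image (fun S => CN G (shore S false))

/-- `X` is the smallest nonempty set of the family `fam`. -/
def IsMinNonempty {α : Type*} (fam : Finset (Finset α)) (X : Finset α) : Prop :=
  X ∈ fam ∧ X.Nonempty ∧ ∀ Y ∈ fam, Y.Nonempty → X ⊆ Y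

section Aux
variable {V : Type*}

lemma mem_CN' [Fintype V] {G : SimpleGraph V} {A : Finset V} {v : V} :
    v ∈ CN G A ↔ ∀ a ∈ A, G.Adj a v := by simp [CN]

lemma mem_shore' {S : Finset (V × Bool)} {b : Bool} {v : V} :
    v ∈ shore S b ↔ (v, b) ∈ S := by
  simp only [shore, mem_image, mem_filter]
  constructor
  · rintro ⟨⟨x, y⟩, ⟨hS, rfl⟩, rfl⟩; exact hS
  · exact fun h => ⟨(v, b), ⟨h, rfl⟩, rfl⟩

lemma shore_mono' {S T : Finset (V × Bool)} (h : S ⊆ T) (b : Bool) :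
    shore S b ⊆ shore T b := fun _ hv => mem_shore'.2 (h (mem_shore'.1 hv))

lemma CN_anti' [Fintype V] {G : SimpleGraph V} {A B : Finset V} (h : A ⊆ B) :
    CN G B ⊆ CN G A := fun v hv => mem_CN'.2 fun a ha => mem_CN'.1 hv a (h ha)

lemma shore_joinPair_false (A B : Finset V) : shore (joinPair A B) false = A := by
  ext v; rw [mem_shore']; simp [joinPair]

lemma shore_joinPair_true (A B : Finset V) : shore (joinPair A B) true = B := by
  ext v; rw [mem_shore']; simp [joinPair]

lemma shore_swap' (S : Finset (V × Bool)) (b : Bool) :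
    shore (swapFinset S) b = shore S (!b) := by
  ext v; rw [mem_shore', mem_shore']
  simp only [swapFinset, mem_image, Prod.ext_iff]
  constructor
  · rintro ⟨⟨x, y⟩, h, rfl, hy⟩
    simpa [← hy] using h
  · exact fun h => ⟨(v, !b), h, rfl, by simp⟩

lemma swap_joinPair' (A B : Finset V) :
    swapFinset (joinPair A B) = joinPair B A := by
  ext ⟨v, b⟩
  simp only [swapFinset, joinPair, mem_image, mem_union, Prod.ext_iff]
  cases b <;> simp

lemma isCompleteBip_symm' {G : SimpleGraph V} {A B : Finset V}
    (h : IsCompleteBip G A B) : IsCompleteBip G B A :=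
  fun b hb a ha => (h a ha b hb).symm

lemma subset_CN_of_complete' [Fintype V] {G : SimpleGraph V} {A B : Finset V}
    (h : IsCompleteBip G A B) : A ⊆ CN G B :=
  fun a ha => mem_CN'.2 fun b hb => (h a ha b hb).symm

lemma shoreF_subset_CN [Fintype V] {G : SimpleGraph V} {S T : Finset (V × Bool)}
    (hS : IsCompleteBip G (shore S false) (shore S true))
    (hT : IsCompleteBip G (shore T false) (shore T true))
    (h : S ⊆ T ∨ T ⊆ S) : shore S false ⊆ CN G (shore T true) := by
  rcases h with h | h
  · exact (shore_mono' h false).trans (subset_CN_of_complete' hT)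
  · exact (subset_CN_of_complete' hS).trans (CN_anti' (shore_mono' h true))

lemma shoreT_subset_CN [Fintype V] {G : SimpleGraph V} {S T : Finset (V × Bool)}
    (hS : IsCompleteBip G (shore S false) (shore S true))
    (hT : IsCompleteBip G (shore T false) (shore T true))
    (h : S ⊆ T ∨ T ⊆ S) : shore S true ⊆ CN G (shore T false) := by
  rcases h with h | h
  · exact (shore_mono' h true).trans (subset_CN_of_complete' (isCompleteBip_symm' hT))
  · exact (subset_CN_of_complete' (isCompleteBip_symm' hS)).trans
      (CN_anti' (shore_mono' h false))

lemma chain_total' {α : Type*} {s : Set (Finset α)} (hc : IsChain (· ⊆ ·) s)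
    {S T : Finset α} (hS : S ∈ s) (hT : T ∈ s) : S ⊆ T ∨ T ⊆ S := by
  rcases eq_or_ne S T with rfl | hne
  · exact Or.inl subset_rfl
  · exact hc hS hT hne

lemma fam1_total [Fintype V] (G : SimpleGraph V) {𝔸 : Finset (Finset (V × Bool))}
    (h𝔸 : SdSdBVertex G 𝔸) :
    ∀ X ∈ fam1 G 𝔸, ∀ Y ∈ fam1 G 𝔸, X ⊆ Y ∨ Y ⊆ X := by
  have hbox : ∀ S ∈ 𝔸, BoxSimplex G S := fun S hS => (h𝔸.2.1 S hS).1
  intro X hX Y hY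
  simp only [fam1, mem_union, mem_image] at hX hY
  rcases hX with ⟨S, hS, rfl⟩ | ⟨S, hS, rfl⟩ <;>
    rcases hY with ⟨T, hT, rfl⟩ | ⟨T, hT, rfl⟩
  · rcases chain_total' h𝔸.2.2 hS hT with h | h
    · exact Or.inl (shore_mono' h false)
    · exact Or.inr (shore_mono' h false)
  · exact Or.inl (shoreF_subset_CN (hbox S hS).2.1 (hbox T hT).2.1
      (chain_total' h𝔸.2.2 hS hT))
  · exact Or.inr (shoreF_subset_CN (hbox T hT).2.1 (hbox S hS).2.1
      (chain_total' h𝔸.2.2 hT hS))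
  · rcases chain_total' h𝔸.2.2 hS hT with h | h
    · exact Or.inr (CN_anti' (shore_mono' h true))
    · exact Or.inl (CN_anti' (shore_mono' h true))

lemma fam2_total [Fintype V] (G : SimpleGraph V) {𝔸 : Finset (Finset (V × Bool))}
    (h𝔸 : SdSdBVertex G 𝔸) :
    ∀ X ∈ fam2 G 𝔸, ∀ Y ∈ fam2 G 𝔸, X ⊆ Y ∨ Y ⊆ X := by
  have hbox : ∀ S ∈ 𝔸, BoxSimplex G S := fun S hS => (h𝔸.2.1 S hS).1
  intro X hX Y hY
  simp only [fam2, mem_union, mem_image] at hX hY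
  rcases hX with ⟨S, hS, rfl⟩ | ⟨S, hS, rfl⟩ <;>
    rcases hY with ⟨T, hT, rfl⟩ | ⟨T, hT, rfl⟩
  · rcases chain_total' h𝔸.2.2 hS hT with h | h
    · exact Or.inl (shore_mono' h true)
    · exact Or.inr (shore_mono' h true)
  · exact Or.inl (shoreT_subset_CN (hbox S hS).2.1 (hbox T hT).2.1
      (chain_total' h𝔸.2.2 hS hT))
  · exact Or.inr (shoreT_subset_CN (hbox T hT).2.1 (hbox S hS).2.1
      (chain_total' h𝔸.2.2 hT hS))
  · rcases chain_total' h𝔸.2.2 hS hT with h | h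
    · exact Or.inr (CN_anti' (shore_mono' h false))
    · exact Or.inl (CN_anti' (shore_mono' h false))

lemma existsUnique_min' {α : Type*} {fam : Finset (Finset α)}
    (htot : ∀ X ∈ fam, ∀ Y ∈ fam, X ⊆ Y ∨ Y ⊆ X)
    (hne : ∃ X ∈ fam, X.Nonempty) : ∃! X, IsMinNonempty fam X := by
  classical
  obtain ⟨X0, hX0, hX0ne⟩ := hne
  have h' : (fam.filter Finset.Nonempty).Nonempty := ⟨X0, mem_filter.2 ⟨hX0, hX0ne⟩⟩
  obtain ⟨m, hm, hmin'⟩ := Finset.exists_minimal h'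
  have hmin : ∀ x ∈ fam.filter Finset.Nonempty, ¬x < m :=
    fun x hx hlt => hlt.ne (le_antisymm hlt.le (hmin' hx hlt.le))
  rw [mem_filter] at hm
  have hmm : IsMinNonempty fam m := by
    refine ⟨hm.1, hm.2, fun Y hY hYne => ?_⟩
    rcases htot m hm.1 Y hY with h | h
    · exact h
    · rcases eq_or_ne Y m with rfl | hne2
      · exact h
      · exact absurd (lt_of_le_of_ne h hne2) (hmin Y (mem_filter.2 ⟨hY, hYne⟩))
  exact ⟨m, hmm, fun Y hY =>
    subset_antisymm (hY.2.2 m hmm.1 hmm.2.1) (hmm.2.2 Y hY.1 hY.2.1)⟩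

lemma min_unique' {α : Type*} {fam : Finset (Finset α)} {X Y : Finset α}
    (hX : IsMinNonempty fam X) (hY : IsMinNonempty fam Y) : X = Y :=
  subset_antisymm (hX.2.2 Y hY.1 hY.2.1) (hY.2.2 X hX.1 hX.2.1)

end Aux

section Aux2
variable {V : Type*}

lemma min_rep1 [Fintype V] {G : SimpleGraph V} {𝔸 : Finset (Finset (V × Bool))}
    (h𝔸 : SdSdBVertex G 𝔸) {X : Finset V} (hX : IsMinNonempty (fam1 G 𝔸) X) :
    (∃ S ∈ 𝔸, X = shore S false) ∨
    (∃ S ∈ 𝔸, X = CN G (shore S true) ∧ (shore S true).Nonempty) := by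
  obtain ⟨hmem, hne, hmin⟩ := hX
  simp only [fam1, mem_union, mem_image] at hmem
  rcases hmem with ⟨S, hS, rfl⟩ | ⟨S, hS, rfl⟩
  · exact Or.inl ⟨S, hS, rfl⟩
  · rcases (shore S true).eq_empty_or_nonempty with he | hne'
    · left
      refine ⟨S, hS, ?_⟩
      have h1 : shore S false ∈ fam1 G 𝔸 :=
        mem_union_left _ (mem_image_of_mem _ hS)
      have hSne : (shore S false).Nonempty := by
        obtain ⟨⟨v, b⟩, hv⟩ := (h𝔸.2.1 S hS).2
        cases b
        · exact ⟨v, mem_shore'.2 hv⟩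
        · exact absurd (mem_shore'.2 hv : v ∈ shore S true) (by simp [he])
      have h2 : CN G (shore S true) ⊆ shore S false := hmin _ h1 hSne
      have h3 : shore S false ⊆ CN G (shore S true) := by
        rw [he]; intro a _
        exact mem_CN'.2 fun b hb => absurd hb (Finset.notMem_empty b)
      exact subset_antisymm h2 h3
    · exact Or.inr ⟨S, hS, rfl, hne'⟩

lemma min_rep2 [Fintype V] {G : SimpleGraph V} {𝔸 : Finset (Finset (V × Bool))}
    (h𝔸 : SdSdBVertex G 𝔸) {X : Finset V} (hX : IsMinNonempty (fam2 G 𝔸) X) :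
    (∃ S ∈ 𝔸, X = shore S true) ∨
    (∃ S ∈ 𝔸, X = CN G (shore S false) ∧ (shore S false).Nonempty) := by
  obtain ⟨hmem, hne, hmin⟩ := hX
  simp only [fam2, mem_union, mem_image] at hmem
  rcases hmem with ⟨S, hS, rfl⟩ | ⟨S, hS, rfl⟩
  · exact Or.inl ⟨S, hS, rfl⟩
  · rcases (shore S false).eq_empty_or_nonempty with he | hne'
    · left
      refine ⟨S, hS, ?_⟩
      have h1 : shore S true ∈ fam2 G 𝔸 :=
        mem_union_left _ (mem_image_of_mem _ hS)
      have hSne : (shore S true).Nonempty := by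
        obtain ⟨⟨v, b⟩, hv⟩ := (h𝔸.2.1 S hS).2
        cases b
        · exact absurd (mem_shore'.2 hv : v ∈ shore S false) (by simp [he])
        · exact ⟨v, mem_shore'.2 hv⟩
      have h2 : CN G (shore S false) ⊆ shore S true := hmin _ h1 hSne
      have h3 : shore S true ⊆ CN G (shore S false) := by
        rw [he]; intro a _
        exact mem_CN'.2 fun b hb => absurd hb (Finset.notMem_empty b)
      exact subset_antisymm h2 h3
    · exact Or.inr ⟨S, hS, rfl, hne'⟩

lemma complete_min [Fintype V] {G : SimpleGraph V} {𝔸 : Finset (Finset (V × Bool))}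
    (h𝔸 : SdSdBVertex G 𝔸) {X Y : Finset V}
    (hX : IsMinNonempty (fam1 G 𝔸) X) (hY : IsMinNonempty (fam2 G 𝔸) Y) :
    IsCompleteBip G X Y := by
  have hbox : ∀ S ∈ 𝔸, BoxSimplex G S := fun S hS => (h𝔸.2.1 S hS).1
  rcases min_rep1 h𝔸 hX with ⟨S, hS, hXe⟩ | ⟨S, hS, hXe, hSne⟩ <;>
    rcases min_rep2 h𝔸 hY with ⟨T, hT, hYe⟩ | ⟨T, hT, hYe, hTne⟩
  · subst hXe; subst hYe
    rcases chain_total' h𝔸.2.2 hS hT with h | h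
    · exact fun a ha b hb => (hbox T hT).2.1 a (shore_mono' h false ha) b hb
    · exact fun a ha b hb => (hbox S hS).2.1 a ha b (shore_mono' h true hb)
  · have h1 : shore T false ∈ fam1 G 𝔸 := mem_union_left _ (mem_image_of_mem _ hT)
    have h2 : X ⊆ shore T false := hX.2.2 _ h1 hTne
    subst hYe
    exact fun a ha b hb => mem_CN'.1 hb a (h2 ha)
  · have h1 : shore S true ∈ fam2 G 𝔸 := mem_union_left _ (mem_image_of_mem _ hS)
    have h2 : Y ⊆ shore S true := hY.2.2 _ h1 hSne
    subst hXe
    exact fun a ha b hb => (mem_CN'.1 ha b (h2 hb)).symm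
  · have h1 : shore T false ∈ fam1 G 𝔸 := mem_union_left _ (mem_image_of_mem _ hT)
    have h2 : X ⊆ shore T false := hX.2.2 _ h1 hTne
    subst hYe
    exact fun a ha b hb => mem_CN'.1 hb a (h2 ha)

lemma b1_of_min [Fintype V] {G : SimpleGraph V} {𝔸 : Finset (Finset (V × Bool))}
    (h𝔸 : SdSdBVertex G 𝔸) {X Y : Finset V}
    (hX : IsMinNonempty (fam1 G 𝔸) X) (hY : IsMinNonempty (fam2 G 𝔸) Y) :
    B1Vertex G (joinPair X Y) := by
  have hc := complete_min h𝔸 hX hY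
  have hd : Disjoint X Y := by
    rw [Finset.disjoint_left]
    intro v hvX hvY
    exact G.irrefl (hc v hvX v hvY)
  simp only [B1Vertex, shore_joinPair_false, shore_joinPair_true]
  exact ⟨hX.2.1, hY.2.1, hd, hc⟩

end Aux2
section Aux3
variable {V : Type*}

lemma boxSimplex_swap' [Fintype V] {G : SimpleGraph V} {S : Finset (V × Bool)}
    (h : BoxSimplex G S) : BoxSimplex G (swapFinset S) := by
  obtain ⟨hd, hc, h1, h2⟩ := h
  refine ⟨?_, ?_, ?_, ?_⟩ <;>
    simp only [shore_swap', Bool.not_false, Bool.not_true]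
  exacts [hd.symm, isCompleteBip_symm' hc, h2, h1]

lemma sdsd_swap' [Fintype V] {G : SimpleGraph V} {𝔸 : Finset (Finset (V × Bool))}
    (h : SdSdBVertex G 𝔸) : SdSdBVertex G (𝔸.image swapFinset) := by
  obtain ⟨hne, hP, hch⟩ := h
  refine ⟨hne.image _, ?_, ?_⟩
  · intro S hS
    rw [mem_image] at hS
    obtain ⟨T, hT, rfl⟩ := hS
    obtain ⟨hb, hTne⟩ := hP T hT
    exact ⟨boxSimplex_swap' hb, hTne.image _⟩
  · intro S hS T hT _
    rw [coe_image, Set.mem_image] at hS hT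
    obtain ⟨S0, hS0, rfl⟩ := hS
    obtain ⟨T0, hT0, rfl⟩ := hT
    rcases chain_total' hch hS0 hT0 with h | h
    · exact Or.inl (image_subset_image h)
    · exact Or.inr (image_subset_image h)

lemma fam1_swap' [Fintype V] (G : SimpleGraph V) (𝔸 : Finset (Finset (V × Bool))) :
    fam1 G (𝔸.image swapFinset) = fam2 G 𝔸 := by
  unfold fam1 fam2
  rw [image_image, image_image]
  congr 1
  · exact image_congr fun S _ => by simp [Function.comp, shore_swap']
  · exact image_congr fun S _ => by simp [Function.comp, shore_swap']

lemma fam2_swap' [Fintype V] (G : SimpleGraph V) (𝔸 : Finset (Finset (V × Bool))) :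
    fam2 G (𝔸.image swapFinset) = fam1 G 𝔸 := by
  unfold fam1 fam2
  rw [image_image, image_image]
  congr 1
  · exact image_congr fun S _ => by simp [Function.comp, shore_swap']
  · exact image_congr fun S _ => by simp [Function.comp, shore_swap']

end Aux3

/-- The smallest nonempty sets `μ'(𝔸)`, `μ''(𝔸)` of the two chains associated with a
vertex `𝔸` of `sd sd B(G)` are well defined, `μ'(𝔸) ⊎ μ''(𝔸)` is a vertex of `B₁(G)`,
and `𝔸 ↦ μ'(𝔸) ⊎ μ''(𝔸)` is a simplicial ℤ₂-map `sd sd B(G) → B₁(G)`. -/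
theorem sd_sd_box_to_B1 [Fintype V] (G : SimpleGraph V) (hiso : ∀ v : V, ∃ u, G.Adj v u) :
    (∀ 𝔸, SdSdBVertex G 𝔸 →
      (∃! X, IsMinNonempty (fam1 G 𝔸) X) ∧ (∃! X, IsMinNonempty (fam2 G 𝔸) X)) ∧
    (∀ μ' μ'' : Finset (Finset (V × Bool)) → Finset V,
      (∀ 𝔸, SdSdBVertex G 𝔸 → IsMinNonempty (fam1 G 𝔸) (μ' 𝔸)) →
      (∀ 𝔸, SdSdBVertex G 𝔸 → IsMinNonempty (fam2 G 𝔸) (μ'' 𝔸)) →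
      (∀ 𝔸, SdSdBVertex G 𝔸 → B1Vertex G (joinPair (μ' 𝔸) (μ'' 𝔸))) ∧
      (∀ 𝒞 : Finset (Finset (Finset (V × Bool))),
        sdSimplex (sdSimplex (BoxSimplex G)) 𝒞 →
        B1Simplex G (𝒞.image fun 𝔸 => joinPair (μ' 𝔸) (μ'' 𝔸))) ∧
      (∀ 𝔸, SdSdBVertex G 𝔸 →
        joinPair (μ' (𝔸.image swapFinset)) (μ'' (𝔸.image swapFinset)) =
          swapFinset (joinPair (μ' 𝔸) (μ'' 𝔸)))) := by
  have hEU : ∀ 𝔸, SdSdBVertex G 𝔸 →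
      (∃! X, IsMinNonempty (fam1 G 𝔸) X) ∧ (∃! X, IsMinNonempty (fam2 G 𝔸) X) := by
    intro 𝔸 h𝔸
    obtain ⟨S, hS⟩ := h𝔸.1
    constructor
    · exact existsUnique_min' (fam1_total G h𝔸)
        ⟨CN G (shore S true), mem_union_right _ (mem_image_of_mem _ hS),
          (h𝔸.2.1 S hS).1.2.2.2⟩
    · exact existsUnique_min' (fam2_total G h𝔸)
        ⟨CN G (shore S false), mem_union_right _ (mem_image_of_mem _ hS),
          (h𝔸.2.1 S hS).1.2.2.1⟩
  refine ⟨hEU, ?_⟩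
  intro μ' μ'' hμ' hμ''
  have hvert : ∀ 𝔸, SdSdBVertex G 𝔸 → B1Vertex G (joinPair (μ' 𝔸) (μ'' 𝔸)) :=
    fun 𝔸 h𝔸 => b1_of_min h𝔸 (hμ' 𝔸 h𝔸) (hμ'' 𝔸 h𝔸)
  refine ⟨hvert, ?_, ?_⟩
  · intro 𝒞 h𝒞
    have hsd : ∀ 𝔸 ∈ 𝒞, SdSdBVertex G 𝔸 :=
      fun 𝔸 h𝔸 => ⟨(h𝒞.1 𝔸 h𝔸).2, (h𝒞.1 𝔸 h𝔸).1⟩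
    constructor
    · intro T hT
      rw [mem_image] at hT
      obtain ⟨𝔸, h𝔸, rfl⟩ := hT
      exact hvert 𝔸 (hsd 𝔸 h𝔸)
    · intro T1 hT1 T2 hT2 _
      rw [coe_image, Set.mem_image] at hT1 hT2
      obtain ⟨𝔸, h𝔸, rfl⟩ := hT1
      obtain ⟨𝔹, h𝔹, rfl⟩ := hT2
      have hA := hsd 𝔸 h𝔸
      have hB := hsd 𝔹 h𝔹
      have key : ∀ {𝔸 𝔹 : Finset (Finset (V × Bool))}, SdSdBVertex G 𝔸 →
          SdSdBVertex G 𝔹 → 𝔸 ⊆ 𝔹 →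
          joinPair (μ' 𝔹) (μ'' 𝔹) ⊆ joinPair (μ' 𝔸) (μ'' 𝔸) := by
        intro 𝔸 𝔹 hA hB h
        have f1 : fam1 G 𝔸 ⊆ fam1 G 𝔹 :=
          union_subset_union (image_subset_image h) (image_subset_image h)
        have f2 : fam2 G 𝔸 ⊆ fam2 G 𝔹 :=
          union_subset_union (image_subset_image h) (image_subset_image h)
        exact union_subset_union
          (image_subset_image ((hμ' 𝔹 hB).2.2 _ (f1 (hμ' 𝔸 hA).1) (hμ' 𝔸 hA).2.1))
          (image_subset_image ((hμ'' 𝔹 hB).2.2 _ (f2 (hμ'' 𝔸 hA).1) (hμ'' 𝔸 hA).2.1))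
      rcases chain_total' h𝒞.2 h𝔸 h𝔹 with h | h
      · exact Or.inr (key hA hB h)
      · exact Or.inl (key hB hA h)
  · intro 𝔸 h𝔸
    have hsw := sdsd_swap' h𝔸
    have e1 : μ' (𝔸.image swapFinset) = μ'' 𝔸 := by
      have a := hμ' _ hsw
      rw [fam1_swap'] at a
      exact min_unique' a (hμ'' 𝔸 h𝔸)
    have e2 : μ'' (𝔸.image swapFinset) = μ' 𝔸 := by
      have a := hμ'' _ hsw
      rw [fam2_swap'] at a
      exact min_unique' a (hμ' 𝔸 h𝔸)
    rw [e1, e2, swap_joinPair']
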